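/- arXiv:2111.11577 — 2 statements merged into one kernel-verified Lean document; each statement's English description precedes it below -/
import Mathlib

section
/- Let H be a linear 3-uniform hypergraph on a vertex set V containing no linear 3-cycle as a subgraph, and let ∂H be its 2-shadow: the simple graph on V in which u and v are adjacent iff {u,v} is contained in some edge of H. Then every edge of ∂H lies in exactly one triangle of ∂H. Consequently, the map H ↦ ∂H is injective on the collection of linear 3-uniform hypergraphs on V that contain no linear 3-cycle. -/
open Filter

namespace Paper

variable {V W : Type*} [DecidableEq V] [DecidableEq W]

/-- `E` is (the edge family of) a linear 3-uniform hypergraph: every edge has 3 vertices and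
two distinct edges meet in at most one vertex. -/
def Linear3 (E : Set (Finset V)) : Prop :=
  (∀ e ∈ E, e.card = 3) ∧ ∀ e ∈ E, ∀ f ∈ E, e ≠ f → (e ∩ f).card ≤ 1

/-- A Ruzsa–Szemerédi hypergraph: a linear 3-uniform hypergraph in which every 6 vertices
span at most 2 edges. -/
def IsRS (E : Set (Finset V)) : Prop :=
  Linear3 E ∧ ∀ S : Finset V, S.card = 6 → {e ∈ E | e ⊆ S}.ncard ≤ 2

/-- `E` contains a linear 3-cycle: edges `{a,b,c}, {c,d,e}, {e,f,a}` on six distinct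
vertices. -/
def HasLinear3Cycle (E : Set (Finset V)) : Prop :=
  ∃ a b c d e f : V, ({a, b, c, d, e, f} : Finset V).card = 6 ∧
    ({a, b, c} : Finset V) ∈ E ∧ ({c, d, e} : Finset V) ∈ E ∧ ({e, f, a} : Finset V) ∈ E

/-- `E` contains a subgraph copy of the hypergraph with edge family `G`. -/
def HasCopy (G : Set (Finset W)) (E : Set (Finset V)) : Prop :=
  ∃ φ : W → V, Function.Injective φ ∧ ∀ e ∈ G, e.image φ ∈ E

/-- `E` contains an induced copy of the hypergraph with edge family `G`. -/
def HasInducedCopy (G : Set (Finset W)) (E : Set (Finset V)) : Prop :=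
  ∃ φ : W → V, Function.Injective φ ∧ (∀ e ∈ G, e.image φ ∈ E) ∧
    ∀ f ∈ E, (f : Set V) ⊆ Set.range φ → ∃ e ∈ G, f = e.image φ

/-- The linear 3-cycle `𝒲³` (as a 3-uniform hypergraph on six vertices). -/
def cycleHG : Set (Finset (Fin 6)) := {{0, 1, 2}, {2, 3, 4}, {4, 5, 0}}

/-- The Fano hypergraph `F₇`. -/
def fanoHG : Set (Finset (Fin 7)) :=
  {{0, 1, 2}, {0, 3, 4}, {0, 5, 6}, {1, 3, 5}, {1, 4, 6}, {2, 3, 6}, {2, 4, 5}}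

/-- The 3-fan (sail) `F`. -/
def fanHG : Set (Finset (Fin 7)) := {{0, 1, 2}, {0, 3, 4}, {0, 5, 6}, {2, 4, 6}}

end Paper

namespace Paper

/-- The 2-shadow of a 3-uniform hypergraph: `u ~ v` iff some edge contains both. -/
def shadow {V : Type*} (E : Set (Finset V)) : SimpleGraph V where
  Adj u v := u ≠ v ∧ ∃ e ∈ E, u ∈ e ∧ v ∈ e
  symm := by
    constructor
    rintro u v ⟨huv, e, he, hu, hv⟩
    exact ⟨huv.symm, e, he, hv, hu⟩
  loopless := by
    constructor
    rintro u ⟨hu, -⟩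
    exact hu rfl


section Aux
variable {V : Type*} [DecidableEq V]

/-- A 3-element finset containing two distinct elements `u, v` is `{u, v, w}`. -/
lemma third_vertex {t : Finset V} (ht : t.card = 3) {u v : V} (hu : u ∈ t) (hv : v ∈ t)
    (huv : u ≠ v) : ∃ w, w ≠ u ∧ w ≠ v ∧ t = {u, v, w} := by
  have hsub : ({u, v} : Finset V) ⊆ t := by
    intro x hx; simp at hx; rcases hx with rfl | rfl <;> assumption
  have hcard : (t \ {u, v}).card = 1 := by
    rw [Finset.card_sdiff_of_subset hsub, ht, Finset.card_insert_of_notMem (by simp [huv]),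
      Finset.card_singleton]
  obtain ⟨w, hw⟩ := Finset.card_eq_one.mp hcard
  have hwmem : w ∈ t \ ({u, v} : Finset V) := by rw [hw]; simp
  simp only [Finset.mem_sdiff, Finset.mem_insert, Finset.mem_singleton] at hwmem
  push_neg at hwmem
  refine ⟨w, hwmem.2.1, hwmem.2.2, ?_⟩
  refine (Finset.eq_of_subset_of_card_le ?_ ?_).symm
  · intro x hx
    simp only [Finset.mem_insert, Finset.mem_singleton] at hx
    rcases hx with rfl | rfl | rfl
    exacts [hu, hv, hwmem.1]
  · rw [ht, Finset.card_insert_of_notMem (by simp [huv, Ne.symm hwmem.2.1]),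
      Finset.card_insert_of_notMem (by simp [Ne.symm hwmem.2.2]), Finset.card_singleton]

/-- In a linear hypergraph, the edge through two distinct vertices is unique. -/
lemma edge_unique {H : Set (Finset V)} (hH : Linear3 H) {e f : Finset V} (he : e ∈ H)
    (hf : f ∈ H) {u v : V} (huv : u ≠ v) (hue : u ∈ e) (hve : v ∈ e) (huf : u ∈ f)
    (hvf : v ∈ f) : e = f := by
  by_contra hne
  have h1 := hH.2 e he f hf hne
  have h2 : ({u, v} : Finset V) ⊆ e ∩ f := by
    intro x hx; simp at hx ⊢; rcases hx with rfl | rfl <;> simp_all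
  have := Finset.card_le_card h2
  rw [Finset.card_insert_of_notMem (by simp [huv]), Finset.card_singleton] at this
  omega

/-- A hyperedge is a triangle of the shadow. -/
lemma edge_isNClique {H : Set (Finset V)} (hH : Linear3 H) {e : Finset V} (he : e ∈ H) :
    (shadow H).IsNClique 3 e := by
  constructor
  · intro a ha b hb hab
    exact ⟨hab, e, he, by simpa using ha, by simpa using hb⟩
  · exact hH.1 e he

lemma unique_triangle {H : Set (Finset V)} (hH : Linear3 H) (hnc : ¬ HasLinear3Cycle H)
    {u v : V} (huv : (shadow H).Adj u v) :
    ∃! t : Finset V, (shadow H).IsNClique 3 t ∧ u ∈ t ∧ v ∈ t := by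
  obtain ⟨hne, e1, he1, hue1, hve1⟩ := huv
  refine ⟨e1, ⟨edge_isNClique hH he1, hue1, hve1⟩, ?_⟩
  rintro t ⟨⟨htc, htcard⟩, hut, hvt⟩
  obtain ⟨w, hwu, hwv, rfl⟩ := third_vertex htcard hut hvt hne
  obtain ⟨x, hxu, hxv, he1x⟩ := third_vertex (hH.1 e1 he1) hue1 hve1 hne
  have hxe1 : x ∈ e1 := by rw [he1x]; simp
  by_cases hwe1 : w ∈ e1
  · -- then w = x and t = e1
    have hwx : w = x := by
      rw [he1x] at hwe1; simp at hwe1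
      rcases hwe1 with rfl | rfl | rfl <;> first | rfl | exact absurd rfl (by assumption)
    subst hwx
    exact he1x.symm
  · exfalso
    have hvw : (shadow H).Adj v w := htc (by simp) (by simp) (Ne.symm hwv)
    have hwu' : (shadow H).Adj w u := htc (by simp) (by simp) hwu
    obtain ⟨-, e2, he2, hve2, hwe2⟩ := hvw
    obtain ⟨-, e3, he3, hwe3, hue3⟩ := hwu'
    obtain ⟨y, hyv, hyw, he2y⟩ := third_vertex (hH.1 e2 he2) hve2 hwe2 (Ne.symm hwv)
    obtain ⟨z, hzw, hzu, he3z⟩ := third_vertex (hH.1 e3 he3) hwe3 hue3 hwu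
    have hye2 : y ∈ e2 := by rw [he2y]; simp
    have hze3 : z ∈ e3 := by rw [he3z]; simp
    -- degenerate cases
    have hwx : w ≠ x := fun h => hwe1 (h ▸ hxe1)
    have hye1 : y ∉ e1 := by
      intro h
      have h12 : e1 = e2 := edge_unique hH he1 he2 (Ne.symm hyv) hve1 h hve2 hye2
      exact hwe1 (h12.symm ▸ hwe2)
    have hze1 : z ∉ e1 := by
      intro h
      have h13 : e1 = e3 := edge_unique hH he1 he3 (Ne.symm hzu) hue1 h hue3 hze3
      exact hwe1 (h13.symm ▸ hwe3)
    have hyz : y ≠ z := by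
      intro h
      subst h
      have h23 : e2 = e3 := edge_unique hH he2 he3 (Ne.symm hyw) hwe2 hye2 hwe3 hze3
      have hue2 : u ∈ e2 := h23.symm ▸ hue3
      rw [he2y] at hue2; simp at hue2
      rcases hue2 with rfl | rfl | rfl
      · exact hne rfl
      · exact hwu rfl
      · exact hye1 hue1
    have hyu : y ≠ u := fun h => hye1 (h ▸ hue1)
    have hyx : y ≠ x := fun h => hye1 (h ▸ hxe1)
    have hzv : z ≠ v := fun h => hze1 (h ▸ hve1)
    have hzx : z ≠ x := fun h => hze1 (h ▸ hxe1)
    -- build the linear 3-cycle u, x, v, y, w, z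
    apply hnc
    refine ⟨u, x, v, y, w, z, ?_, ?_, ?_, ?_⟩
    · have n1 : u ∉ ({x, v, y, w, z} : Finset V) := by
        simp only [Finset.mem_insert, Finset.mem_singleton]; push_neg
        exact ⟨Ne.symm hxu, hne, Ne.symm hyu, Ne.symm hwu, Ne.symm hzu⟩
      have n2 : x ∉ ({v, y, w, z} : Finset V) := by
        simp only [Finset.mem_insert, Finset.mem_singleton]; push_neg
        exact ⟨hxv, Ne.symm hyx, Ne.symm hwx, Ne.symm hzx⟩
      have n3 : v ∉ ({y, w, z} : Finset V) := by
        simp only [Finset.mem_insert, Finset.mem_singleton]; push_neg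
        exact ⟨Ne.symm hyv, Ne.symm hwv, Ne.symm hzv⟩
      have n4 : y ∉ ({w, z} : Finset V) := by
        simp only [Finset.mem_insert, Finset.mem_singleton]; push_neg
        exact ⟨hyw, hyz⟩
      have n5 : w ∉ ({z} : Finset V) := by
        simp only [Finset.mem_singleton]; exact Ne.symm hzw
      rw [Finset.card_insert_of_notMem n1, Finset.card_insert_of_notMem n2,
        Finset.card_insert_of_notMem n3, Finset.card_insert_of_notMem n4,
        Finset.card_insert_of_notMem n5, Finset.card_singleton]
    · have : ({u, x, v} : Finset V) = e1 := by
        rw [he1x]; ext a; simp; tauto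
      rw [this]; exact he1
    · have : ({v, y, w} : Finset V) = e2 := by
        rw [he2y]; ext a; simp; tauto
      rw [this]; exact he2
    · have : ({w, z, u} : Finset V) = e3 := by
        rw [he3z]; ext a; simp; tauto
      rw [this]; exact he3

lemma shadow_subset {H H' : Set (Finset V)} (hH : Linear3 H) (hH' : Linear3 H')
    (hnc' : ¬ HasLinear3Cycle H') (hsh : shadow H = shadow H') : H ⊆ H' := by
  intro e he
  obtain ⟨u, v, w, huv, huw, hvw, rfl⟩ := Finset.card_eq_three.mp (hH.1 e he)
  have hadj : (shadow H).Adj u v := ⟨huv, _, he, by simp, by simp⟩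
  have hadj' : (shadow H').Adj u v := hsh ▸ hadj
  obtain ⟨-, f, hf, huf, hvf⟩ := id hadj'
  have huniq := unique_triangle hH' hnc' hadj'
  obtain ⟨t, -, ht⟩ := huniq
  have h1 : ({u, v, w} : Finset V) = t := by
    apply ht
    refine ⟨?_, by simp, by simp⟩
    rw [← hsh]
    exact edge_isNClique hH he
  have h2 : f = t := ht f ⟨edge_isNClique hH' hf, huf, hvf⟩
  rw [h1, ← h2]
  exact hf

end Aux

/-- In a linear 3-uniform hypergraph with no linear 3-cycle, every edge of the 2-shadow lies
in exactly one triangle; consequently `H ↦ ∂H` is injective on such hypergraphs. -/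
theorem shadow_unique_triangle_and_injective {V : Type*} [DecidableEq V] :
    (∀ H : Set (Finset V), Linear3 H → ¬ HasLinear3Cycle H →
      ∀ u v : V, (shadow H).Adj u v →
        ∃! t : Finset V, (shadow H).IsNClique 3 t ∧ u ∈ t ∧ v ∈ t) ∧
    (∀ H H' : Set (Finset V), Linear3 H → ¬ HasLinear3Cycle H →
      Linear3 H' → ¬ HasLinear3Cycle H' → shadow H = shadow H' → H = H') := by
  constructor
  · intro H hH hnc u v huv
    exact unique_triangle hH hnc huv
  · intro H H' hH hnc hH' hnc' hsh
    exact Set.Subset.antisymm (shadow_subset hH hH' hnc' hsh)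
      (shadow_subset hH' hH hnc hsh.symm)

end Paper
end

section
/- Let E be a finite linearly ordered set and let M be a rank-3 paving matroid on E. For each hyperplane H of M, let 𝒱(H) be the set of 3-element subsets T of H such that no element of H ∖ T lies strictly between two elements of T (the consecutive triples of H); list 𝒱(H) in its induced linear order as V_H⁰ < V_H¹ < ⋯, and let 𝒱⁰(M) (resp. 𝒱¹(M)) be the union over all hyperplanes H of the even-indexed (resp. odd-indexed) triples V_H^i. Then for k ∈ {0,1}, any two distinct members of 𝒱^k(M) intersect in at most one element — so 𝒱^k(M) is the set of circuit-hyperplanes of a rank-3 sparse paving matroid on E — and the map M ↦ (𝒱⁰(M), 𝒱¹(M)) is injective on the set of rank-3 paving matroids on E. -/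
open Matroid Set Filter

namespace Paper

variable {α β : Type*}

/-- Deletion of a set from a matroid. -/
def Delete (M : Matroid α) (D : Set α) : Matroid α := M ↾ (M.E \ D)

/-- Contraction of a set in a matroid, defined via duality. -/
def Contract (M : Matroid α) (C : Set α) : Matroid α := (Delete M✶ C)✶

/-- `N` is a minor of `M` if it is obtained from `M` by a contraction followed by a deletion. -/
def IsMinor (N M : Matroid α) : Prop := ∃ C D : Set α, N = Delete (Contract M C) D

/-- `M` is isomorphic to `N`. -/
def Iso (M : Matroid α) (N : Matroid β) : Prop :=
  ∃ (f : α → β) (hf : Set.InjOn f M.E), M.map f hf = N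

/-- `M` has a minor isomorphic to `N`. -/
def HasIsoMinor (M : Matroid α) (N : Matroid β) : Prop :=
  ∃ M' : Matroid α, IsMinor M' M ∧ Iso M' N

/-- A circuit is a minimal dependent set. -/
def Circuit (M : Matroid α) (C : Set α) : Prop := M.Dep C ∧ ∀ D, D ⊂ C → M.Indep D

/-- A hyperplane is a maximal proper flat. -/
def Hyperplane (M : Matroid α) (H : Set α) : Prop :=
  M.IsFlat H ∧ H ≠ M.E ∧ ∀ F, M.IsFlat F → H ⊂ F → F = M.E

/-- A matroid is sparse paving if every nonspanning circuit is a hyperplane. -/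
def SparsePaving (M : Matroid α) : Prop :=
  ∀ C, Circuit M C → ¬ M.Spanning C → Hyperplane M C

/-- `M` has rank `r`: some base has exactly `r` elements. -/
def RankEq (M : Matroid α) (r : ℕ) : Prop := ∃ B, M.IsBase B ∧ B.ncard = r

/-- `N` is (isomorphic to) the rank-3 whirl `𝒲³`: the rank-3 sparse paving matroid on six
elements whose 3-element circuits are exactly the three listed triples. -/
def IsWhirl3 (N : Matroid α) : Prop :=
  ∃ a : Fin 6 → α, Function.Injective a ∧ N.E = Set.range a ∧
    RankEq N 3 ∧ SparsePaving N ∧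
    ∀ C : Set α, (Circuit N C ∧ C.ncard = 3) ↔
      (C = {a 0, a 1, a 2} ∨ C = {a 2, a 3, a 4} ∨ C = {a 4, a 5, a 0})

/-- `N` is (isomorphic to) `M(K₄)`: the rank-3 sparse paving matroid on six elements whose
3-element circuits are exactly the four listed triples. -/
def IsMK4 (N : Matroid α) : Prop :=
  ∃ a : Fin 6 → α, Function.Injective a ∧ N.E = Set.range a ∧
    RankEq N 3 ∧ SparsePaving N ∧
    ∀ C : Set α, (Circuit N C ∧ C.ncard = 3) ↔
      (C = {a 0, a 1, a 2} ∨ C = {a 2, a 3, a 4} ∨ C = {a 4, a 5, a 0} ∨ C = {a 1, a 3, a 5})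

/-- `M` has no minor isomorphic to `𝒲³` and no minor isomorphic to `M(K₄)`. -/
def WFree (M : Matroid α) : Prop :=
  (¬ ∃ N : Matroid α, IsMinor N M ∧ IsWhirl3 N) ∧
  (¬ ∃ N : Matroid α, IsMinor N M ∧ IsMK4 N)

end Paper

namespace Paper

variable {α : Type*} [LinearOrder α]

/-- A rank-3 paving matroid: every circuit has 3 or 4 elements. -/
def Paving3 (M : Matroid α) : Prop :=
  RankEq M 3 ∧ ∀ C, Circuit M C → C.ncard = 3 ∨ C.ncard = 4

/-- `T` is a consecutive triple of `H`: a 3-element subset of `H` such that no element of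
`H \ T` lies strictly between two elements of `T`. -/
def ConsecTriple (H T : Set α) : Prop :=
  T ⊆ H ∧ T.ncard = 3 ∧ ∀ h ∈ H, h ∉ T → ∀ v ∈ T, ∀ v' ∈ T, ¬ (v < h ∧ h < v')

/-- `𝒱^k(M)` (`k ∈ {0,1}`): the union over all hyperplanes `H` of `M` of the even-indexed
(`k = 0`) resp. odd-indexed (`k = 1`) consecutive triples of `H`; the index of a consecutive
triple `T` of `H` in the induced linear order on `𝒱(H)` is the number of elements of `H`
strictly below all of `T`. -/
def Vk (M : Matroid α) (k : ℕ) : Set (Set α) :=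
  {T | ∃ H, Hyperplane M H ∧ ConsecTriple H T ∧
    {h ∈ H | ∀ t ∈ T, h < t}.ncard % 2 = k}

end Paper

namespace Paper

section Aux

variable {α : Type*}

lemma flat_closure (M : Matroid α) (X : Set α) : M.IsFlat (M.closure X) := by
  rw [Matroid.closure_def]
  have hne : {F | M.IsFlat F ∧ X ∩ M.E ⊆ F}.Nonempty :=
    ⟨M.E, M.ground_isFlat, inter_subset_right⟩
  haveI := hne.to_subtype
  rw [sInter_eq_iInter]
  exact Matroid.IsFlat.iInter fun F ↦ F.2.1

lemma flat_of_closure_eq {M : Matroid α} {F : Set α} (h : M.closure F = F) : M.IsFlat F :=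
  h ▸ flat_closure M F

lemma exists_circuit_subset (M : Matroid α) :
    ∀ n {X : Set α}, X.Finite → X.ncard ≤ n → M.Dep X → ∃ C, C ⊆ X ∧ Circuit M C := by
  intro n
  induction n with
  | zero =>
    intro X hfin hcard hdep
    have : X = ∅ := by
      rw [← Set.ncard_eq_zero hfin]; omega
    subst this
    exact absurd M.empty_indep hdep.1
  | succ n ih =>
    intro X hfin hcard hdep
    by_cases h : ∀ D, D ⊂ X → M.Indep D
    · exact ⟨X, subset_rfl, hdep, h⟩
    push_neg at h
    obtain ⟨D, hDX, hD⟩ := h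
    have hdep' : M.Dep D := ⟨hD, hDX.subset.trans hdep.subset_ground⟩
    have hlt := Set.ncard_lt_ncard hDX hfin
    obtain ⟨C, hCD, hC⟩ := ih (hfin.subset hDX.subset) (by omega) hdep'
    exact ⟨C, hCD.trans hDX.subset, hC⟩

variable {M : Matroid α} {E : Set α}

lemma indep_of_ncard_le_two (hE : E.Finite) (hME : M.E = E) (hM : Paving3 M)
    {X : Set α} (hX : X ⊆ E) (h2 : X.ncard ≤ 2) : M.Indep X := by
  by_contra h
  have hdep : M.Dep X := ⟨h, hME ▸ hX⟩
  obtain ⟨C, hCX, hC⟩ := exists_circuit_subset M X.ncard (hE.subset hX) le_rfl hdep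
  have h3 := hM.2 C hC
  have h4 : C.ncard ≤ X.ncard := Set.ncard_le_ncard hCX (hE.subset hX)
  omega

lemma base_ncard (hE : E.Finite) (hME : M.E = E) (hM : Paving3 M)
    {B : Set α} (hB : M.IsBase B) : B.ncard = 3 := by
  obtain ⟨B0, hB0, hB03⟩ := hM.1
  have h := hB.encard_eq_encard_of_isBase hB0
  rw [Set.ncard_def, h, ← Set.ncard_def, hB03]

lemma indep_ncard_le_three (hE : E.Finite) (hME : M.E = E) (hM : Paving3 M)
    {I : Set α} (hI : M.Indep I) : I.ncard ≤ 3 := by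
  obtain ⟨B, hB, hIB⟩ := hI.exists_isBase_superset
  have h1 := base_ncard hE hME hM hB
  have h2 : I.ncard ≤ B.ncard := Set.ncard_le_ncard hIB (hE.subset (hME ▸ hB.subset_ground))
  omega

lemma base_of_indep_three (hE : E.Finite) (hME : M.E = E) (hM : Paving3 M)
    {I : Set α} (hI : M.Indep I) (h3 : I.ncard = 3) : M.IsBase I := by
  obtain ⟨B, hB, hIB⟩ := hI.exists_isBase_superset
  have hBc := base_ncard hE hME hM hB
  have hIB' : I = B :=
    Set.eq_of_subset_of_ncard_le hIB (by omega) (hE.subset (hME ▸ hB.subset_ground))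
  rwa [hIB']

lemma flat_eq_ground_of_extra (hE : E.Finite) (hME : M.E = E) (hM : Paving3 M)
    {F : Set α} {a b x : α} (hF : M.IsFlat F) (hab : a ≠ b)
    (ha : a ∈ F) (hb : b ∈ F) (hxF : x ∈ F) (hxcl : x ∉ M.closure {a, b}) : F = M.E := by
  have hFE := hF.subset_ground
  have hpairE : ({a, b} : Set α) ⊆ M.E := by
    rw [Set.pair_subset_iff]; exact ⟨hFE ha, hFE hb⟩
  have hpair : M.Indep {a, b} :=
    indep_of_ncard_le_two hE hME hM (hME ▸ hpairE) (le_of_eq (Set.ncard_pair hab))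
  have hxab : x ∉ ({a, b} : Set α) := fun h => hxcl (M.subset_closure {a, b} hpairE h)
  have hins : M.Indep (insert x {a, b}) := by
    rw [hpair.insert_indep_iff_of_notMem hxab]
    exact ⟨hFE hxF, hxcl⟩
  have hcard : (insert x {a, b} : Set α).ncard = 3 := by
    rw [Set.ncard_insert_of_notMem hxab (hE.subset (hME ▸ hpairE)), Set.ncard_pair hab]
  have hbase := base_of_indep_three hE hME hM hins hcard
  refine subset_antisymm hFE ?_
  rw [← hbase.closure_eq]
  refine (M.closure_subset_closure ?_).trans hF.closure.subset
  exact Set.insert_subset hxF (Set.pair_subset ha hb)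

lemma closure_pair_hyperplane (hE : E.Finite) (hME : M.E = E) (hM : Paving3 M)
    {a b : α} (hab : a ≠ b) (ha : a ∈ E) (hb : b ∈ E) :
    Hyperplane M (M.closure {a, b}) := by
  have hpairE : ({a, b} : Set α) ⊆ M.E := by
    rw [Set.pair_subset_iff, hME]; exact ⟨ha, hb⟩
  have hpair : M.Indep {a, b} :=
    indep_of_ncard_le_two hE hME hM (hME ▸ hpairE) (le_of_eq (Set.ncard_pair hab))
  refine ⟨flat_closure M _, ?_, ?_⟩
  · intro hcl
    have hsp : M.Spanning {a, b} := ⟨hcl, hpairE⟩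
    have hbase := hpair.isBase_of_spanning hsp
    have h3 := base_ncard hE hME hM hbase
    rw [Set.ncard_pair hab] at h3
    omega
  · intro F hF hss
    obtain ⟨x, hxF, hxcl⟩ := Set.exists_of_ssubset hss
    have hsub := M.subset_closure {a, b} hpairE
    exact flat_eq_ground_of_extra hE hME hM hF hab (hss.subset (hsub (by simp)))
      (hss.subset (hsub (by simp))) hxF hxcl

lemma hyperplane_eq_closure_pair (hE : E.Finite) (hME : M.E = E) (hM : Paving3 M)
    {H : Set α} {a b : α} (hH : Hyperplane M H) (ha : a ∈ H) (hb : b ∈ H) (hab : a ≠ b) :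
    H = M.closure {a, b} := by
  have hsub : M.closure {a, b} ⊆ H := by
    have h1 : M.closure {a, b} ⊆ M.closure H := M.closure_subset_closure (Set.pair_subset ha hb)
    rwa [hH.1.closure] at h1
  refine subset_antisymm ?_ hsub
  by_contra hns
  obtain ⟨x, hxH, hxcl⟩ := Set.not_subset.1 hns
  exact hH.2.1 (flat_eq_ground_of_extra hE hME hM hH.1 hab ha hb hxH hxcl)

lemma subset_closure_pair_of_dep (hE : E.Finite) (hME : M.E = E) (hM : Paving3 M)
    {a b c : α} (hab : a ≠ b) (hca : c ∉ ({a, b} : Set α))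
    (hdep : M.Dep {a, b, c}) : ({a, b, c} : Set α) ⊆ M.closure {a, b} := by
  have hTE : ({a, b, c} : Set α) ⊆ M.E := hdep.subset_ground
  have hpairE : ({a, b} : Set α) ⊆ M.E := by
    rw [Set.pair_subset_iff]; exact ⟨hTE (by simp), hTE (by simp)⟩
  have hpair : M.Indep {a, b} :=
    indep_of_ncard_le_two hE hME hM (hME ▸ hpairE) (le_of_eq (Set.ncard_pair hab))
  have hdep' : M.Dep (insert c {a, b}) := by
    have heq : ({a, b, c} : Set α) = insert c {a, b} := by
      ext w; simp; tauto
    rwa [heq] at hdep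
  have hccl : c ∈ M.closure {a, b} := (hpair.insert_dep_iff.1 hdep').1
  have hsub := M.subset_closure {a, b} hpairE
  intro w hw
  rcases hw with rfl | rfl | rfl
  · exact hsub (by simp)
  · exact hsub (by simp)
  · exact hccl

lemma dep_three_iff (hE : E.Finite) (hME : M.E = E) (hM : Paving3 M)
    {T : Set α} (hTE : T ⊆ E) (h3 : T.ncard = 3) :
    M.Dep T ↔ ∃ H, Hyperplane M H ∧ T ⊆ H := by
  constructor
  · intro hdep
    obtain ⟨a, b, c, hab, hac, hbc, rfl⟩ := Set.ncard_eq_three.1 h3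
    have hca : c ∉ ({a, b} : Set α) := by simp [Ne.symm hac, Ne.symm hbc]
    refine ⟨M.closure {a, b}, closure_pair_hyperplane hE hME hM hab
      (hTE (by simp)) (hTE (by simp)), subset_closure_pair_of_dep hE hME hM hab hca hdep⟩
  · rintro ⟨H, hH, hTH⟩
    refine ⟨fun hind => ?_, hME ▸ hTE⟩
    have hbase := base_of_indep_three hE hME hM hind h3
    refine hH.2.1 (subset_antisymm hH.1.subset_ground ?_)
    rw [← hbase.closure_eq]
    exact (M.closure_subset_closure hTH).trans hH.1.closure.subset

lemma closure_pair_eq_of_dep (hE : E.Finite) (hME : M.E = E) (hM : Paving3 M)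
    {a b c : α} (hab : a ≠ b) (hac : a ≠ c) (hbc : b ≠ c)
    (hdep : M.Dep {a, b, c}) : M.closure {a, b} = M.closure {b, c} := by
  have hca : c ∉ ({a, b} : Set α) := by simp [Ne.symm hac, Ne.symm hbc]
  have hTE : ({a, b, c} : Set α) ⊆ E := hME ▸ hdep.subset_ground
  have hsub := subset_closure_pair_of_dep hE hME hM hab hca hdep
  have hHyp := closure_pair_hyperplane hE hME hM hab (hTE (by simp)) (hTE (by simp))
  exact hyperplane_eq_closure_pair hE hME hM hHyp (hsub (by simp)) (hsub (by simp)) hbc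

lemma hyperplane_inter_ncard_le_one (hE : E.Finite) (hME : M.E = E) (hM : Paving3 M)
    {H₁ H₂ : Set α} (h1 : Hyperplane M H₁) (h2 : Hyperplane M H₂) (hne : H₁ ≠ H₂) :
    (H₁ ∩ H₂).ncard ≤ 1 := by
  have hfin : (H₁ ∩ H₂).Finite :=
    hE.subset ((Set.inter_subset_left).trans (hME ▸ h1.1.subset_ground))
  rw [Set.ncard_le_one hfin]
  intro a ha b hb
  by_contra hab
  exact hne ((hyperplane_eq_closure_pair hE hME hM h1 ha.1 hb.1 hab).trans
    (hyperplane_eq_closure_pair hE hME hM h2 ha.2 hb.2 hab).symm)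

end Aux

section Order

variable {α : Type*} [LinearOrder α]

lemma exists_sorted_three {s : Set α} (h : s.ncard = 3) :
    ∃ a b c : α, a < b ∧ b < c ∧ s = {a, b, c} := by
  obtain ⟨x, y, z, hxy, hxz, hyz, rfl⟩ := Set.ncard_eq_three.1 h
  rcases hxy.lt_or_gt with h1 | h1 <;> rcases hxz.lt_or_gt with h2 | h2 <;>
    rcases hyz.lt_or_gt with h3 | h3
  · exact ⟨x, y, z, h1, h3, rfl⟩
  · exact ⟨x, z, y, h2, h3, by ext w; simp; tauto⟩
  · exact absurd (h1.trans h3) h2.asymm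
  · exact ⟨z, x, y, h2, h1, by ext w; simp; tauto⟩
  · exact ⟨y, x, z, h1, h2, by ext w; simp; tauto⟩
  · exact absurd (h2.trans h3) h1.asymm
  · exact ⟨y, z, x, h3, h2, by ext w; simp; tauto⟩
  · exact ⟨z, y, x, h3, h1, by ext w; simp; tauto⟩

lemma consecTriple_of_idx {s : Finset α} {n : ℕ} (hn : s.card = n) {i : ℕ} (hi : i + 2 < n) :
    ConsecTriple (↑s) {s.orderEmbOfFin hn ⟨i, by omega⟩, s.orderEmbOfFin hn ⟨i + 1, by omega⟩,
      s.orderEmbOfFin hn ⟨i + 2, hi⟩} := by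
  set f := s.orderEmbOfFin hn with hf
  have hmem : ∀ j : Fin n, (f j : α) ∈ (↑s : Set α) := fun j => s.orderEmbOfFin_mem hn j
  have hlt : ∀ j j' : Fin n, (j : ℕ) < (j' : ℕ) → f j < f j' := by
    intro j j' hjj'
    exact f.strictMono (by rwa [Fin.lt_def])
  refine ⟨?_, ?_, ?_⟩
  · intro w hw
    rcases hw with rfl | rfl | rfl <;> exact hmem _
  · refine Set.ncard_eq_three.2 ⟨_, _, _, ?_, ?_, ?_, rfl⟩
    · exact (hlt _ _ (by simp)).ne
    · exact (hlt _ _ (by simp)).ne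
    · exact (hlt _ _ (by simp)).ne
  · intro h hh hhT v hv v' hv' hpair2
    obtain ⟨hl, hr⟩ := hpair2
    have hrange : h ∈ Set.range f := by rw [Finset.range_orderEmbOfFin]; exact hh
    obtain ⟨j, rfl⟩ := hrange
    have hlo : i < (j : ℕ) := by
      rcases hv with rfl | rfl | rfl
      all_goals
        have h' := f.strictMono.lt_iff_lt.1 hl
        simp [Fin.lt_def] at h'
        omega
    have hhi : (j : ℕ) < i + 2 := by
      rcases hv' with rfl | rfl | rfl
      all_goals
        have h' := f.strictMono.lt_iff_lt.1 hr
        simp [Fin.lt_def] at h'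
        omega
    have hj : j = (⟨i + 1, by omega⟩ : Fin n) := by
      apply Fin.ext; simp; omega
    exact hhT (by rw [hj]; simp)

lemma consecTriple_idx {s : Finset α} {n : ℕ} (hn : s.card = n) {T : Set α}
    (h : ConsecTriple (↑s) T) :
    ∃ (i : ℕ) (hi : i + 2 < n),
      T = {s.orderEmbOfFin hn ⟨i, by omega⟩, s.orderEmbOfFin hn ⟨i + 1, by omega⟩,
        s.orderEmbOfFin hn ⟨i + 2, hi⟩} := by
  set f := s.orderEmbOfFin hn with hf
  obtain ⟨hTs, hT3, hcons⟩ := h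
  obtain ⟨a, b, c, hab, hbc, rfl⟩ := exists_sorted_three hT3
  have hrange : ∀ w ∈ ({a, b, c} : Set α), w ∈ Set.range f := by
    intro w hw
    rw [Finset.range_orderEmbOfFin]; exact hTs hw
  obtain ⟨p, hp⟩ := hrange a (by simp)
  obtain ⟨q, hq⟩ := hrange b (by simp)
  obtain ⟨r, hr⟩ := hrange c (by simp)
  have hpq : (p : ℕ) < (q : ℕ) := by
    have h' : f p < f q := by rw [hp, hq]; exact hab
    have h'' := f.strictMono.lt_iff_lt.1 h'; rwa [Fin.lt_def] at h''
  have hqr : (q : ℕ) < (r : ℕ) := by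
    have h' : f q < f r := by rw [hq, hr]; exact hbc
    have h'' := f.strictMono.lt_iff_lt.1 h'; rwa [Fin.lt_def] at h''
  have hstep : ∀ m m' : Fin n, (m : ℕ) < (m' : ℕ) → f m < f m' := by
    intro m m' hmm'
    exact f.strictMono (by rwa [Fin.lt_def])
  have hq1 : (q : ℕ) = (p : ℕ) + 1 := by
    by_contra hne
    have hlt : (p : ℕ) + 1 < (q : ℕ) := by omega
    have hjn : (p : ℕ) + 1 < n := by omega
    have hjmem : (f ⟨(p : ℕ) + 1, hjn⟩ : α) ∈ (↑s : Set α) := s.orderEmbOfFin_mem hn _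
    have hjT : (f ⟨(p : ℕ) + 1, hjn⟩ : α) ∉ ({a, b, c} : Set α) := by
      intro hmem
      rcases hmem with h' | h' | h'
      · rw [← hp] at h'; have h'' := congrArg Fin.val (f.injective h'); simp at h''
      · rw [← hq] at h'; have h'' := congrArg Fin.val (f.injective h'); simp at h''; omega
      · rw [← hr] at h'; have h'' := congrArg Fin.val (f.injective h'); simp at h''; omega
    refine hcons _ hjmem hjT a (by simp) b (by simp) ⟨?_, ?_⟩
    · rw [← hp]; exact hstep p _ (by simp)
    · rw [← hq]; exact hstep _ q (by simp; omega)
  have hr1 : (r : ℕ) = (q : ℕ) + 1 := by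
    by_contra hne
    have hlt : (q : ℕ) + 1 < (r : ℕ) := by omega
    have hjn : (q : ℕ) + 1 < n := by omega
    have hjmem : (f ⟨(q : ℕ) + 1, hjn⟩ : α) ∈ (↑s : Set α) := s.orderEmbOfFin_mem hn _
    have hjT : (f ⟨(q : ℕ) + 1, hjn⟩ : α) ∉ ({a, b, c} : Set α) := by
      intro hmem
      rcases hmem with h' | h' | h'
      · rw [← hp] at h'; have h'' := congrArg Fin.val (f.injective h'); simp at h''; omega
      · rw [← hq] at h'; have h'' := congrArg Fin.val (f.injective h'); simp at h''
      · rw [← hr] at h'; have h'' := congrArg Fin.val (f.injective h'); simp at h''; omega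
    refine hcons _ hjmem hjT b (by simp) c (by simp) ⟨?_, ?_⟩
    · rw [← hq]; exact hstep q _ (by simp)
    · rw [← hr]; exact hstep _ r (by simp; omega)
  have hrn : (p : ℕ) + 2 < n := by
    have := r.2; omega
  refine ⟨(p : ℕ), hrn, ?_⟩
  have e1 : (⟨(p : ℕ), by omega⟩ : Fin n) = p := by apply Fin.ext; rfl
  have e2 : (⟨(p : ℕ) + 1, by omega⟩ : Fin n) = q := by apply Fin.ext; simp; omega
  have e3 : (⟨(p : ℕ) + 2, by omega⟩ : Fin n) = r := by apply Fin.ext; simp; omega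
  rw [e1, e2, e3, hp, hq, hr]

lemma idx_ncard {s : Finset α} {n : ℕ} (hn : s.card = n) {i : ℕ} (hi : i + 2 < n) :
    {h ∈ (↑s : Set α) | ∀ t ∈ ({s.orderEmbOfFin hn ⟨i, by omega⟩,
        s.orderEmbOfFin hn ⟨i + 1, by omega⟩, s.orderEmbOfFin hn ⟨i + 2, hi⟩} : Set α),
      h < t}.ncard = i := by
  set f := s.orderEmbOfFin hn with hf
  have himg : {h ∈ (↑s : Set α) | ∀ t ∈ ({f ⟨i, by omega⟩, f ⟨i + 1, by omega⟩,
      f ⟨i + 2, hi⟩} : Set α), h < t} = (fun j : Fin n => (f j : α)) '' {j : Fin n | (j : ℕ) < i} := by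
    ext x
    simp only [Set.mem_setOf_eq, Set.mem_image, Set.mem_sep_iff]
    constructor
    · rintro ⟨hxs, hxlt⟩
      have hxr : x ∈ Set.range f := by rw [Finset.range_orderEmbOfFin]; exact hxs
      obtain ⟨j, rfl⟩ := hxr
      refine ⟨j, ?_, rfl⟩
      have h1 := hxlt (f ⟨i, by omega⟩) (by simp)
      have h2 := f.strictMono.lt_iff_lt.1 h1
      simp [Fin.lt_def] at h2
      exact h2
    · rintro ⟨j, hji, rfl⟩
      refine ⟨s.orderEmbOfFin_mem hn j, ?_⟩
      intro t ht
      rcases ht with rfl | rfl | rfl <;>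
        exact f.strictMono (by rw [Fin.lt_def]; simp; omega)
  rw [himg, Set.ncard_image_of_injective _ f.injective]
  have hset : {j : Fin n | (j : ℕ) < i} = Set.range (Fin.castLE (by omega : i ≤ n)) := by
    ext j
    simp only [Set.mem_setOf_eq, Set.mem_range]
    constructor
    · intro hji
      exact ⟨⟨(j : ℕ), hji⟩, by apply Fin.ext; rfl⟩
    · rintro ⟨m, rfl⟩
      exact m.2
  rw [hset, ← Set.image_univ, Set.ncard_image_of_injective _ (Fin.castLE_injective _),
    Set.ncard_univ, Nat.card_eq_fintype_card, Fintype.card_fin]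

end Order

section Pairwise

variable {α : Type*} [LinearOrder α] {M : Matroid α} {E : Set α}

lemma triples_inter_ncard_le_one {s : Finset α} {n : ℕ} (hn : s.card = n)
    {i j : ℕ} (hi : i + 2 < n) (hj : j + 2 < n) (hij : i + 2 ≤ j) :
    (({s.orderEmbOfFin hn ⟨i, by omega⟩, s.orderEmbOfFin hn ⟨i + 1, by omega⟩,
        s.orderEmbOfFin hn ⟨i + 2, hi⟩} : Set α) ∩
      {s.orderEmbOfFin hn ⟨j, by omega⟩, s.orderEmbOfFin hn ⟨j + 1, by omega⟩,
        s.orderEmbOfFin hn ⟨j + 2, hj⟩}).ncard ≤ 1 := by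
  set f := s.orderEmbOfFin hn with hf
  have hsub : (({f ⟨i, by omega⟩, f ⟨i + 1, by omega⟩, f ⟨i + 2, hi⟩} : Set α) ∩
      {f ⟨j, by omega⟩, f ⟨j + 1, by omega⟩, f ⟨j + 2, hj⟩}) ⊆ {f ⟨j, by omega⟩} := by
    rintro x ⟨hx1, hx2⟩
    have hval : ∀ (a b : ℕ) (ha : a < n) (hb : b < n),
        f ⟨a, ha⟩ = f ⟨b, hb⟩ → a = b := by
      intro a b ha hb hab
      have := congrArg Fin.val (f.injective hab)
      simpa using this
    simp only [Set.mem_insert_iff, Set.mem_singleton_iff] at hx1 hx2 ⊢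
    rcases hx1 with rfl | rfl | rfl <;> rcases hx2 with h2 | h2 | h2 <;>
      first
        | exact h2
        | (exfalso; have := hval _ _ _ _ h2; omega)
  calc _ ≤ ({f ⟨j, by omega⟩} : Set α).ncard :=
        Set.ncard_le_ncard hsub (Set.finite_singleton _)
    _ = 1 := Set.ncard_singleton _

lemma Vk_pairwise (hE : E.Finite) (hME : M.E = E) (hM : Paving3 M) (k : ℕ) :
    ∀ T₁ ∈ Vk M k, ∀ T₂ ∈ Vk M k, T₁ ≠ T₂ → (T₁ ∩ T₂).ncard ≤ 1 := by
  intro T₁ hT₁ T₂ hT₂ hne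
  obtain ⟨H₁, hH₁, hct₁, hp₁⟩ := hT₁
  obtain ⟨H₂, hH₂, hct₂, hp₂⟩ := hT₂
  by_cases hHH : H₁ = H₂
  · subst hHH
    have hH₁E : H₁ ⊆ E := hME ▸ hH₁.1.subset_ground
    have hfin : H₁.Finite := hE.subset hH₁E
    have hcoe : (↑hfin.toFinset : Set α) = H₁ := hfin.coe_toFinset
    rw [← hcoe] at hct₁ hct₂ hp₁ hp₂
    obtain ⟨i, hi, rfl⟩ := consecTriple_idx rfl hct₁
    obtain ⟨j, hj, rfl⟩ := consecTriple_idx rfl hct₂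
    rw [idx_ncard rfl hi] at hp₁
    rw [idx_ncard rfl hj] at hp₂
    rcases Nat.lt_trichotomy i j with hlt | heq | hlt
    · exact triples_inter_ncard_le_one rfl hi hj (by omega)
    · exfalso; subst heq; exact hne rfl
    · rw [Set.inter_comm]
      exact triples_inter_ncard_le_one rfl hj hi (by omega)
  · have hsub : T₁ ∩ T₂ ⊆ H₁ ∩ H₂ := Set.inter_subset_inter hct₁.1 hct₂.1
    have hfin : (H₁ ∩ H₂).Finite :=
      hE.subset (Set.inter_subset_left.trans (hME ▸ hH₁.1.subset_ground))
    exact le_trans (Set.ncard_le_ncard hsub hfin)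
      (hyperplane_inter_ncard_le_one hE hME hM hH₁ hH₂ hHH)

end Pairwise

section Construct

variable {α : Type*} {E : Set α}

lemma exists_spm (hE : E.Finite) (V : Set (Set α))
    (hV3 : ∀ T ∈ V, T.ncard = 3 ∧ T ⊆ E)
    (hVp : ∀ T₁ ∈ V, ∀ T₂ ∈ V, T₁ ≠ T₂ → (T₁ ∩ T₂).ncard ≤ 1)
    {B₀ : Set α} (hB₀E : B₀ ⊆ E) (hB₀3 : B₀.ncard = 3) (hB₀V : B₀ ∉ V) :
    ∃ N : Matroid α, N.E = E ∧ RankEq N 3 ∧ SparsePaving N ∧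
      {C : Set α | Circuit N C ∧ ¬ N.Spanning C} = V := by
  set Ind : Set α → Prop := fun X => X ⊆ E ∧ X.ncard ≤ 3 ∧ X ∉ V with hInd
  have hne3 : ∀ X, X.ncard ≠ 3 → X ∉ V := fun X hX hXV => hX (hV3 X hXV).1
  have ind_empty : Ind ∅ := ⟨Set.empty_subset _, by simp, hne3 _ (by simp)⟩
  have ind_subset : ∀ ⦃I J : Set α⦄, Ind J → I ⊆ J → Ind I := by
    rintro I J ⟨hJE, hJc, hJV⟩ hIJ
    have hJfin : J.Finite := hE.subset hJE
    refine ⟨hIJ.trans hJE, le_trans (Set.ncard_le_ncard hIJ hJfin) hJc, fun hIV => ?_⟩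
    have hI3 := (hV3 I hIV).1
    have : I = J := Set.eq_of_subset_of_ncard_le hIJ (by omega) hJfin
    exact hJV (this ▸ hIV)
  have ind_aug : ∀ ⦃I J : Set α⦄, Ind I → Ind J → I.ncard < J.ncard →
      ∃ e ∈ J, e ∉ I ∧ Ind (insert e I) := by
    rintro I J ⟨hIE, hIc, hIV⟩ ⟨hJE, hJc, hJV⟩ hlt
    have hIfin : I.Finite := hE.subset hIE
    have hJfin : J.Finite := hE.subset hJE
    by_cases h1 : I.ncard ≤ 1
    · obtain ⟨e, heJ, heI⟩ := Set.exists_mem_notMem_of_ncard_lt_ncard hlt hIfin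
      have hcard := Set.ncard_insert_le e I
      exact ⟨e, heJ, heI, Set.insert_subset (hJE heJ) hIE, by omega, hne3 _ (by omega)⟩
    have hI2 : I.ncard = 2 := by omega
    have hJ3 : J.ncard = 3 := by omega
    by_cases hIJ : I ⊆ J
    · obtain ⟨e, heJ, heI⟩ := Set.exists_mem_notMem_of_ncard_lt_ncard hlt hIfin
      have hsub : insert e I ⊆ J := Set.insert_subset heJ hIJ
      have hcard : (insert e I).ncard = 3 := by
        rw [Set.ncard_insert_of_notMem heI hIfin]; omega
      have heq : insert e I = J := Set.eq_of_subset_of_ncard_le hsub (by omega) hJfin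
      exact ⟨e, heJ, heI, by rw [heq]; exact ⟨hJE, by omega, hJV⟩⟩
    · have hcap : (J ∩ I).ncard ≤ 1 := by
        by_contra hc
        push_neg at hc
        have hsub : J ∩ I ⊆ I := Set.inter_subset_right
        have heq : J ∩ I = I := Set.eq_of_subset_of_ncard_le hsub (by omega) hIfin
        exact hIJ (fun x hx => by
          have : x ∈ J ∩ I := heq.symm ▸ hx
          exact this.1)
      have hdiff : 2 ≤ (J \ I).ncard := by
        have hu : J ∩ I ∪ J \ I = J := Set.inter_union_diff J I
        have hle := Set.ncard_union_le (J ∩ I) (J \ I)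
        rw [hu] at hle
        omega
      obtain ⟨P, hPsub, hP2⟩ := Set.exists_subset_card_eq hdiff
      obtain ⟨e₁, e₂, hee, rfl⟩ := Set.ncard_eq_two.1 hP2
      have he₁ := hPsub (show e₁ ∈ ({e₁, e₂} : Set α) by simp)
      have he₂ := hPsub (show e₂ ∈ ({e₁, e₂} : Set α) by simp)
      have hkey : ∀ a b : α, a ∈ J \ I → b ∈ J \ I → a ≠ b → insert a I ∈ V →
          insert b I ∉ V := by
        intro a b ha hb hab haV hbV
        have hne' : insert a I ≠ insert b I := by
          intro h
          have : a ∈ insert b I := h ▸ Set.mem_insert a I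
          rcases this with h' | h'
          · exact hab h'
          · exact ha.2 h'
        have hVle := hVp _ haV _ hbV hne'
        have hIsub : I ⊆ insert a I ∩ insert b I :=
          Set.subset_inter (Set.subset_insert _ _) (Set.subset_insert _ _)
        have h2le : 2 ≤ (insert a I ∩ insert b I).ncard := by
          have hfin' : (insert a I ∩ insert b I).Finite :=
            (hIfin.insert a).subset Set.inter_subset_left
          have := Set.ncard_le_ncard hIsub hfin'
          omega
        omega
      by_cases hb : insert e₁ I ∈ V
      · refine ⟨e₂, he₂.1, he₂.2, Set.insert_subset (hJE he₂.1) hIE, ?_, ?_⟩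
        · rw [Set.ncard_insert_of_notMem he₂.2 hIfin]; omega
        · exact hkey e₁ e₂ he₁ he₂ hee hb
      · refine ⟨e₁, he₁.1, he₁.2, Set.insert_subset (hJE he₁.1) hIE, ?_, hb⟩
        rw [Set.ncard_insert_of_notMem he₁.2 hIfin]; omega
  have ind_ground : ∀ ⦃I : Set α⦄, Ind I → I ⊆ E := fun I hI => hI.1
  set N : Matroid α :=
    (IndepMatroid.ofFinite hE Ind ind_empty ind_subset ind_aug ind_ground).matroid with hN
  have hNI : ∀ X, N.Indep X ↔ Ind X := by
    intro X
    rw [hN, IndepMatroid.matroid_indep_iff, IndepMatroid.ofFinite_indep]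
  have hNE : N.E = E := by rw [hN]; rfl
  have hpairfin : ∀ a b : α, ({a, b} : Set α).Finite := fun a b =>
    (Set.finite_singleton b).insert a
  have hIndB₀ : N.Indep B₀ := (hNI _).2 ⟨hB₀E, by omega, hB₀V⟩
  have hbase3 : ∀ I, N.Indep I → I.ncard = 3 → N.IsBase I := by
    intro I hI h3
    apply hI.isBase_of_maximal
    intro J hJ hIJ
    have hJI := (hNI _).1 hJ
    exact Set.eq_of_subset_of_ncard_le hIJ (by omega) (hE.subset hJI.1)
  have hB₀base : N.IsBase B₀ := hbase3 _ hIndB₀ hB₀3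
  have hNbase3 : ∀ B, N.IsBase B → B.ncard = 3 := by
    intro B hB
    have h := hB.encard_eq_encard_of_isBase hB₀base
    rw [Set.ncard_def, h, ← Set.ncard_def, hB₀3]
  have hdep3V : ∀ T, T ⊆ E → T.ncard = 3 → (N.Dep T ↔ T ∈ V) := by
    intro T hTE h3
    rw [Matroid.dep_iff, hNE]
    constructor
    · rintro ⟨hni, -⟩
      by_contra hTV
      exact hni ((hNI _).2 ⟨hTE, by omega, hTV⟩)
    · intro hTV
      exact ⟨fun hind => ((hNI _).1 hind).2.2 hTV, hTE⟩
  have hspan3 : ∀ T, N.Indep T → T.ncard = 3 → ∀ C, T ⊆ C → C ⊆ E → N.Spanning C := by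
    intro T hT h3 C hTC hCE
    exact ((hbase3 T hT h3).spanning).superset hTC (by rw [hNE]; exact hCE)
  have hVnotspan : ∀ T ∈ V, ¬ N.Spanning T := by
    intro T hTV hsp
    obtain ⟨B, hB, hBT⟩ := hsp.exists_isBase_subset
    have hB3 := hNbase3 B hB
    have hBisT : B = T := Set.eq_of_subset_of_ncard_le hBT
      (by rw [(hV3 T hTV).1]; omega) (hE.subset (hV3 T hTV).2)
    have hTind := hB.indep
    rw [hBisT] at hTind
    exact ((hNI _).1 hTind).2.2 hTV
  have hVcirc : ∀ T ∈ V, Circuit N T := by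
    intro T hTV
    obtain ⟨h3, hTE⟩ := hV3 T hTV
    refine ⟨(hdep3V T hTE h3).2 hTV, ?_⟩
    intro D hD
    have hDlt : D.ncard < 3 := by
      have := Set.ncard_lt_ncard hD (hE.subset hTE); omega
    exact (hNI _).2 ⟨hD.subset.trans hTE, by omega, hne3 _ (by omega)⟩
  have hVhyp : ∀ T ∈ V, Hyperplane N T := by
    intro T hTV
    obtain ⟨h3, hTE⟩ := hV3 T hTV
    obtain ⟨a, b, c, hab, hac, hbc, rfl⟩ := Set.ncard_eq_three.1 h3
    have haE : a ∈ E := hTE (by simp)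
    have hbE : b ∈ E := hTE (by simp)
    have hcE : c ∈ E := hTE (by simp)
    have habE : ({a, b} : Set α) ⊆ E := by rw [Set.pair_subset_iff]; exact ⟨haE, hbE⟩
    have hpairE : ({a, b} : Set α) ⊆ N.E := by rw [hNE]; exact habE
    have hpairI : N.Indep {a, b} := (hNI _).2 ⟨habE,
      by rw [Set.ncard_pair hab]; omega, hne3 _ (by rw [Set.ncard_pair hab]; omega)⟩
    have hdepT : N.Dep {a, b, c} := (hdep3V _ hTE h3).2 hTV
    have hcab : c ∉ ({a, b} : Set α) := by simp [Ne.symm hac, Ne.symm hbc]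
    have hdep' : N.Dep (insert c {a, b}) := by
      have heq : ({a, b, c} : Set α) = insert c {a, b} := by ext w; simp; tauto
      rwa [heq] at hdepT
    have hccl : c ∈ N.closure {a, b} := (hpairI.insert_dep_iff.1 hdep').1
    have hTsubCl : ({a, b, c} : Set α) ⊆ N.closure {a, b} := by
      have hsc := N.subset_closure ({a, b} : Set α) hpairE
      intro w hw
      rcases hw with h | h | h
      · exact hsc (by rw [h]; exact Set.mem_insert a {b})
      · exact hsc (by rw [h]; simp)
      · rw [h]; exact hccl
    have hnotherV : ∀ x, x ∉ ({a, b, c} : Set α) → insert x {a, b} ∉ V := by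
      intro x hx hmem
      have hneq : insert x {a, b} ≠ {a, b, c} := fun h => hx (h ▸ Set.mem_insert x {a, b})
      have hVle := hVp _ hmem _ hTV hneq
      have hIsub : ({a, b} : Set α) ⊆ insert x {a, b} ∩ {a, b, c} := by
        intro w hw
        refine ⟨Set.mem_insert_iff.2 (Or.inr hw), ?_⟩
        rcases hw with rfl | rfl
        · simp
        · simp
      have hfin' : ((insert x ({a, b} : Set α)) ∩ ({a, b, c} : Set α)).Finite :=
        (hE.subset hTE).subset Set.inter_subset_right
      have h2 := Set.ncard_le_ncard hIsub hfin'
      rw [Set.ncard_pair hab] at h2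
      omega
    have habT : ({a, b} : Set α) ⊆ ({a, b, c} : Set α) := by
      intro w hw; rcases hw with rfl | rfl
      · simp
      · simp
    have hclT : N.closure {a, b, c} = {a, b, c} := by
      have hbasis : N.IsBasis {a, b} {a, b, c} :=
        hpairI.isBasis_of_subset_of_subset_closure habT hTsubCl
      refine subset_antisymm ?_ (N.subset_closure _ (by rw [hNE]; exact hTE))
      intro x hx
      by_contra hxT
      rw [← hbasis.closure_eq_closure] at hx
      have hxab : x ∉ ({a, b} : Set α) := fun h => hxT (habT h)
      have hdepx : N.Dep (insert x {a, b}) := hpairI.insert_dep_iff.2 ⟨hx, hxab⟩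
      have hxV : insert x {a, b} ∈ V := by
        refine (hdep3V _ ?_ ?_).1 hdepx
        · rw [← hNE]; exact hdepx.subset_ground
        · rw [Set.ncard_insert_of_notMem hxab (hpairfin a b), Set.ncard_pair hab]
      exact hnotherV x hxT hxV
    have hflat : N.IsFlat {a, b, c} := flat_of_closure_eq hclT
    refine ⟨hflat, ?_, ?_⟩
    · intro hTeq
      have hsubB : B₀ ⊆ ({a, b, c} : Set α) := by rw [hTeq, hNE]; exact hB₀E
      have hBeq : B₀ = ({a, b, c} : Set α) :=
        Set.eq_of_subset_of_ncard_le hsubB (by omega) (hE.subset hTE)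
      rw [← hBeq] at hTV
      exact hB₀V hTV
    · intro F hF hss
      obtain ⟨x, hxF, hxT⟩ := Set.exists_of_ssubset hss
      have hxE : x ∈ E := by rw [← hNE]; exact hF.subset_ground hxF
      have hxab : x ∉ ({a, b} : Set α) := fun h => hxT (habT h)
      have hins3 : (insert x {a, b} : Set α).ncard = 3 := by
        rw [Set.ncard_insert_of_notMem hxab (hpairfin a b), Set.ncard_pair hab]
      have hinsI : N.Indep (insert x {a, b}) :=
        (hNI _).2 ⟨Set.insert_subset hxE habE, by omega, hnotherV x hxT⟩
      have hbase := hbase3 _ hinsI hins3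
      refine subset_antisymm hF.subset_ground ?_
      rw [← hbase.closure_eq]
      refine (N.closure_subset_closure ?_).trans hF.closure.subset
      exact Set.insert_subset hxF (habT.trans hss.subset)
  have hcirceq : {C : Set α | Circuit N C ∧ ¬ N.Spanning C} = V := by
    ext C
    simp only [Set.mem_setOf_eq]
    constructor
    · rintro ⟨⟨hdep, hmin⟩, hnsp⟩
      by_contra hCV
      have hCE : C ⊆ E := by rw [← hNE]; exact hdep.subset_ground
      have hC4 : 4 ≤ C.ncard := by
        by_contra hlt
        push_neg at hlt
        exact hdep.1 ((hNI _).2 ⟨hCE, by omega, hCV⟩)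
      obtain ⟨T, hTC, hT3⟩ := Set.exists_subset_card_eq (show 3 ≤ C.ncard by omega)
      have hss : T ⊂ C := hTC.ssubset_of_ne (by intro h; rw [h] at hT3; omega)
      have hTind := hmin T hss
      exact hnsp (hspan3 T hTind hT3 C hss.subset hCE)
    · intro hCV
      exact ⟨hVcirc C hCV, hVnotspan C hCV⟩
  refine ⟨N, hNE, ⟨B₀, hB₀base, hB₀3⟩, ?_, hcirceq⟩
  intro C hC hnsp
  have hCV : C ∈ V := by rw [← hcirceq]; exact ⟨hC, hnsp⟩
  exact hVhyp C hCV

end Construct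

section Transfer

variable {α : Type*} [LinearOrder α]

lemma dep_transfer {M M' : Matroid α} {E : Set α}
    (hE : E.Finite) (hME : M.E = E) (hM'E : M'.E = E) (hM : Paving3 M) (hM' : Paving3 M')
    (h0 : Vk M 0 = Vk M' 0) (h1 : Vk M 1 = Vk M' 1)
    {T : Set α} (hT3 : T.ncard = 3) (hdep : M.Dep T) : M'.Dep T := by
  have hTE : T ⊆ E := hME ▸ hdep.subset_ground
  obtain ⟨H, hH, hTH⟩ := (dep_three_iff hE hME hM hTE hT3).1 hdep
  have hHE : H ⊆ E := hME ▸ hH.1.subset_ground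
  have hHfin : H.Finite := hE.subset hHE
  set s := hHfin.toFinset with hs
  have hcoe : (↑s : Set α) = H := hHfin.coe_toFinset
  set n := s.card with hn
  have hn3 : 3 ≤ n := by
    have h1' : T.ncard ≤ H.ncard := Set.ncard_le_ncard hTH hHfin
    have h2' : H.ncard = n := by rw [hn, hs, Set.ncard_eq_toFinset_card _ hHfin]
    omega
  set f := s.orderEmbOfFin hn.symm with hf
  have hfmemH : ∀ j : Fin n, (f j : α) ∈ H := fun j => hcoe ▸ s.orderEmbOfFin_mem hn.symm j
  have hfmem : ∀ j : Fin n, (f j : α) ∈ E := fun j => hHE (hfmemH j)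
  have hdist : ∀ (x y : ℕ) (hx : x < n) (hy : y < n), x ≠ y → f ⟨x, hx⟩ ≠ f ⟨y, hy⟩ := by
    intro x y hx hy hxy heq
    have h' := congrArg Fin.val (f.injective heq)
    simp at h'
    exact hxy h'
  have htridep : ∀ i (hi : i + 2 < n),
      M'.Dep {f ⟨i, by omega⟩, f ⟨i + 1, by omega⟩, f ⟨i + 2, hi⟩} := by
    intro i hi
    have hct : ConsecTriple (↑s) {f ⟨i, by omega⟩, f ⟨i + 1, by omega⟩, f ⟨i + 2, hi⟩} :=
      consecTriple_of_idx hn.symm hi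
    have hidx := idx_ncard (s := s) hn.symm hi
    rw [hcoe] at hct hidx
    have hmem : ({f ⟨i, by omega⟩, f ⟨i + 1, by omega⟩, f ⟨i + 2, hi⟩} : Set α)
        ∈ Vk M (i % 2) := ⟨H, hH, hct, by rw [hidx]⟩
    have hmem' : ({f ⟨i, by omega⟩, f ⟨i + 1, by omega⟩, f ⟨i + 2, hi⟩} : Set α)
        ∈ Vk M' (i % 2) := by
      rcases Nat.mod_two_eq_zero_or_one i with h2 | h2
      · rw [h2] at hmem ⊢; rw [← h0]; exact hmem
      · rw [h2] at hmem ⊢; rw [← h1]; exact hmem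
    obtain ⟨H', hH', hct', -⟩ := hmem'
    exact (dep_three_iff hE hM'E hM' (hct'.1.trans (hM'E ▸ hH'.1.subset_ground))
      hct'.2.1).2 ⟨H', hH', hct'.1⟩
  have hchain : ∀ i (hi1 : i + 1 < n), M'.closure {f ⟨i, by omega⟩, f ⟨i + 1, hi1⟩} =
      M'.closure {f ⟨0, by omega⟩, f ⟨1, by omega⟩} := by
    intro i
    induction i with
    | zero => intro hi1; rfl
    | succ m ih =>
      intro hi1
      have hm2 : m + 2 < n := by omega
      have hdepm := htridep m hm2
      have hcl := closure_pair_eq_of_dep hE hM'E hM'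
        (hdist m (m + 1) (by omega) (by omega) (by omega))
        (hdist m (m + 2) (by omega) (by omega) (by omega))
        (hdist (m + 1) (m + 2) (by omega) (by omega) (by omega)) hdepm
      have e : (⟨m + 1 + 1, hi1⟩ : Fin n) = ⟨m + 2, hm2⟩ := by apply Fin.ext; simp
      rw [e, ← hcl]
      exact ih (by omega)
  set H0 := M'.closure {f ⟨0, by omega⟩, f ⟨1, by omega⟩} with hH0def
  have hH0 : Hyperplane M' H0 :=
    closure_pair_hyperplane hE hM'E hM' (hdist 0 1 (by omega) (by omega) (by omega))
      (hfmem _) (hfmem _)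
  have hsubH0 : H ⊆ H0 := by
    intro x hx
    have hxr : x ∈ Set.range f := by
      rw [hf, Finset.range_orderEmbOfFin, hcoe]; exact hx
    obtain ⟨j, rfl⟩ := hxr
    by_cases hj : (j : ℕ) + 1 < n
    · have hjeq : (⟨(j : ℕ), by omega⟩ : Fin n) = j := Fin.ext rfl
      rw [hH0def, ← hchain (j : ℕ) hj]
      refine M'.subset_closure _ ?_ ?_
      · rw [hM'E]; exact Set.pair_subset (hfmem _) (hfmem _)
      · exact Set.mem_insert_iff.2 (Or.inl (by rw [hjeq]))
    · have hj1 : (j : ℕ) = n - 1 := by have := j.2; omega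
      have hlt : (n - 2) + 1 < n := by omega
      have hjeq : (⟨(n - 2) + 1, by omega⟩ : Fin n) = j := by
        apply Fin.ext; simp; omega
      rw [hH0def, ← hchain (n - 2) hlt]
      refine M'.subset_closure _ ?_ ?_
      · rw [hM'E]; exact Set.pair_subset (hfmem _) (hfmem _)
      · refine Set.mem_insert_iff.2 (Or.inr ?_)
        rw [hjeq]
        exact rfl
  exact (dep_three_iff hE hM'E hM' hTE hT3).2 ⟨H0, hH0, hTH.trans hsubH0⟩

lemma indep_transfer {M M' : Matroid α} {E : Set α}
    (hE : E.Finite) (hME : M.E = E) (hM'E : M'.E = E) (hM : Paving3 M) (hM' : Paving3 M')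
    (h0 : Vk M 0 = Vk M' 0) (h1 : Vk M 1 = Vk M' 1)
    {I : Set α} (hI : M.Indep I) : M'.Indep I := by
  have hIE : I ⊆ E := hME ▸ hI.subset_ground
  have hle := indep_ncard_le_three hE hME hM hI
  by_cases h2 : I.ncard ≤ 2
  · exact indep_of_ncard_le_two hE hM'E hM' hIE h2
  have h3 : I.ncard = 3 := by omega
  by_contra hni
  have hdep' : M'.Dep I := ⟨hni, hM'E ▸ hIE⟩
  have hdep : M.Dep I := dep_transfer hE hM'E hME hM' hM h0.symm h1.symm h3 hdep'
  exact hdep.1 hI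

end Transfer

/-- **Pendavingh–Van der Pol encoding.** For a rank-3 paving matroid `M` on a finite linearly
ordered ground set `E`: for `k ∈ {0,1}` the members of `𝒱^k(M)` pairwise intersect in at most
one element, so `𝒱^k(M)` is the family of circuit-hyperplanes (nonspanning circuits) of a
rank-3 sparse paving matroid on `E`; and the map `M ↦ (𝒱⁰(M), 𝒱¹(M))` is injective on rank-3
paving matroids on `E`. -/
theorem paving_encoding {α : Type*} [LinearOrder α] (E : Set α) (hE : E.Finite) :
    (∀ M : Matroid α, M.E = E → Paving3 M → ∀ k ∈ ({0, 1} : Set ℕ),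
      (∀ T₁ ∈ Vk M k, ∀ T₂ ∈ Vk M k, T₁ ≠ T₂ → (T₁ ∩ T₂).ncard ≤ 1) ∧
      ∃ N : Matroid α, N.E = E ∧ RankEq N 3 ∧ SparsePaving N ∧
        {C : Set α | Circuit N C ∧ ¬ N.Spanning C} = Vk M k) ∧
    (∀ M M' : Matroid α, M.E = E → M'.E = E → Paving3 M → Paving3 M' →
      Vk M 0 = Vk M' 0 → Vk M 1 = Vk M' 1 → M = M') := by
  constructor
  · intro M hME hM k _hk
    have hpair := Vk_pairwise hE hME hM k
    refine ⟨hpair, ?_⟩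
    obtain ⟨B₀, hB₀, hB₀3⟩ := hM.1
    have hB₀E : B₀ ⊆ E := hME ▸ hB₀.subset_ground
    have hV3 : ∀ T ∈ Vk M k, T.ncard = 3 ∧ T ⊆ E := by
      rintro T ⟨H, hH, hct, -⟩
      exact ⟨hct.2.1, hct.1.trans (hME ▸ hH.1.subset_ground)⟩
    have hB₀V : B₀ ∉ Vk M k := by
      rintro ⟨H, hH, hct, -⟩
      have hdep : M.Dep B₀ := (dep_three_iff hE hME hM hB₀E hB₀3).2 ⟨H, hH, hct.1⟩
      exact hdep.1 hB₀.indep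
    exact exists_spm hE (Vk M k) hV3 hpair hB₀E hB₀3 hB₀V
  · intro M M' hME hM'E hM hM' h0 h1
    refine Matroid.ext_indep (by rw [hME, hM'E]) ?_
    intro I _hI
    exact ⟨fun h => indep_transfer hE hME hM'E hM hM' h0 h1 h,
      fun h => indep_transfer hE hM'E hME hM' hM h0.symm h1.symm h⟩


end Paper
end
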